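/- (Variational formula for the entropic risk measure) For a finite irreducible aperiodic Markov chain with transition matrix P and cost C, the entropic risk e(α) := Λ(α)/α satisfies e(α) = sup over irreducible aperiodic stochastic matrices Q with Q ≪ P of [E_{π_Q}[C(X)] − (1/α) E_{π_Q}[D_KL(Q(X,·) ‖ P(X,·))]], where π_Q is the stationary distribution of Q. -/

import Mathlib

open Matrix Filter Topology

/-- A (row-)stochastic matrix on a finite state space. -/
def StochasticMat {X : Type*} [Fintype X] (P : Matrix X X ℝ) : Prop :=
  (∀ x y, 0 ≤ P x y) ∧ ∀ x, ∑ y, P x y = 1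

/-- A primitive nonnegative matrix: some power has all entries strictly positive.
For finite stochastic matrices this is equivalent to irreducibility together with
aperiodicity. -/
def PrimitiveMat {X : Type*} [Fintype X] [DecidableEq X] (P : Matrix X X ℝ) : Prop :=
  ∃ n : ℕ, 0 < n ∧ ∀ x y, 0 < (P ^ n) x y


lemma aux_sum_eq {X : Type*} [Fintype X] (f g : X → ℝ) (hle : ∀ x, f x ≤ g x)
    (hsum : ∑ x, g x ≤ ∑ x, f x) : ∀ x, f x = g x := by
  intro x
  by_contra hne
  have : ∑ x, f x < ∑ x, g x :=
    Finset.sum_lt_sum (fun i _ => hle i)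
      ⟨x, Finset.mem_univ x, lt_of_le_of_ne (hle x) hne⟩
  linarith

lemma exists_stationary {X : Type*} [Fintype X] [DecidableEq X] [Nonempty X]
    (Q : Matrix X X ℝ) (hQ : StochasticMat Q) :
    ∃ π : X → ℝ, (∀ x, 0 ≤ π x) ∧ (∑ x, π x = 1) ∧ (∀ y, ∑ x, π x * Q x y = π y) := by
  have hdet : (Q - 1).det = 0 := by
    rw [← Matrix.exists_mulVec_eq_zero_iff]
    refine ⟨fun _ => 1, ?_, ?_⟩
    · intro hcon
      have := congrFun hcon (Classical.arbitrary X)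
      simp at this
    · funext x
      simp [Matrix.sub_mulVec, Matrix.mulVec, dotProduct, hQ.2 x, Matrix.one_mulVec, Matrix.one_apply]
  obtain ⟨v, hv0, hv⟩ := Matrix.exists_vecMul_eq_zero_iff.mpr hdet
  have hfix : ∀ y, ∑ x, v x * Q x y = v y := by
    intro y
    have h1 := congrFun hv y
    have h2 : (v ᵥ* Q) y - (v ᵥ* (1 : Matrix X X ℝ)) y = 0 := by
      have := Matrix.vecMul_sub Q 1 v
      rw [this] at hv
      have := congrFun hv y
      simpa using this
    rw [Matrix.vecMul_one] at h2
    have : (v ᵥ* Q) y = v y := by linarith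
    simpa [Matrix.vecMul, dotProduct] using this
  set w : X → ℝ := fun x => |v x| with hw
  have hle : ∀ y, w y ≤ ∑ x, w x * Q x y := by
    intro y
    calc w y = |∑ x, v x * Q x y| := by rw [hfix y]
    _ ≤ ∑ x, |v x * Q x y| := Finset.abs_sum_le_sum_abs _ _
    _ = ∑ x, w x * Q x y := by
        refine Finset.sum_congr rfl fun x _ => ?_
        rw [abs_mul, abs_of_nonneg (hQ.1 x y)]
  have hsums : ∑ y, (∑ x, w x * Q x y) ≤ ∑ y, w y := by
    rw [Finset.sum_comm]
    simp_rw [← Finset.mul_sum]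
    simp [hQ.2]
  have hwfix : ∀ y, w y = ∑ x, w x * Q x y := aux_sum_eq w _ hle hsums
  have hT : 0 < ∑ x, w x := by
    obtain ⟨x0, hx0⟩ : ∃ x, v x ≠ 0 := by
      by_contra hc; push_neg at hc; exact hv0 (funext hc)
    exact Finset.sum_pos' (fun x _ => abs_nonneg _)
      ⟨x0, Finset.mem_univ x0, abs_pos.mpr hx0⟩
  set T := ∑ x, w x
  refine ⟨fun x => w x / T, fun x => div_nonneg (abs_nonneg _) hT.le, ?_, ?_⟩
  · rw [← Finset.sum_div, div_self hT.ne']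
  · intro y
    have : ∑ x, w x / T * Q x y = (∑ x, w x * Q x y) / T := by
      rw [Finset.sum_div]; exact Finset.sum_congr rfl fun x _ => by ring
    rw [this, ← hwfix y]

lemma pow_entry_nonneg {X : Type*} [Fintype X] [DecidableEq X] (P : Matrix X X ℝ)
    (hP : ∀ x y, 0 ≤ P x y) : ∀ n x y, 0 ≤ (P ^ n) x y := by
  intro n
  induction n with
  | zero => intro x y; simp [Matrix.one_apply]; positivity
  | succ n ih =>
    intro x y
    rw [pow_succ, Matrix.mul_apply]
    exact Finset.sum_nonneg fun z _ => mul_nonneg (ih x z) (hP z y)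

lemma pow_lower {X : Type*} [Fintype X] [DecidableEq X] (S P : Matrix X X ℝ) (c : ℝ)
    (hc : 0 < c) (hP : ∀ x y, 0 ≤ P x y) (hle : ∀ x y, c * P x y ≤ S x y) :
    ∀ n x y, c ^ n * (P ^ n) x y ≤ (S ^ n) x y := by
  intro n
  induction n with
  | zero => intro x y; simp
  | succ n ih =>
    intro x y
    rw [pow_succ P, pow_succ S, Matrix.mul_apply, Matrix.mul_apply, Finset.mul_sum]
    refine Finset.sum_le_sum fun z _ => ?_
    have h1 : c ^ n * (P ^ n) x z * (c * P z y) ≤ (S ^ n) x z * S z y := by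
      refine mul_le_mul (ih x z) (hle z y) (mul_nonneg hc.le (hP z y))
        (le_trans (mul_nonneg (pow_nonneg hc.le n) (pow_entry_nonneg P hP n x z)) (ih x z))
    calc c ^ (n + 1) * ((P ^ n) x z * P z y)
        = c ^ n * (P ^ n) x z * (c * P z y) := by ring
      _ ≤ (S ^ n) x z * S z y := h1

lemma pow_formula {X : Type*} [Fintype X] [DecidableEq X] (S Q : Matrix X X ℝ)
    (h : X → ℝ) (hpos : ∀ x, 0 < h x) (lam : ℝ) (hlam : 0 < lam)
    (hQ : ∀ x y, Q x y = S x y * h y / (lam * h x)) :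
    ∀ n x y, (Q ^ n) x y = (S ^ n) x y * h y / (lam ^ n * h x) := by
  intro n
  induction n with
  | zero =>
    intro x y
    by_cases hxy : x = y
    · subst hxy; simp [Matrix.one_apply, (hpos x).ne']
    · simp [Matrix.one_apply, hxy]
  | succ n ih =>
    intro x y
    rw [pow_succ Q, pow_succ S, Matrix.mul_apply, Matrix.mul_apply]
    have key : ∀ z, (Q ^ n) x z * Q z y
        = (S ^ n) x z * S z y * (h y / (lam ^ (n + 1) * h x)) := by
      intro z
      rw [ih x z, hQ z y]
      have h1 := (hpos x).ne'
      have h2 := (hpos z).ne'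
      have h3 := hlam.ne'
      field_simp
      ring
    simp_rw [key]
    rw [← Finset.sum_mul, mul_div_assoc]

lemma stat_transfer {X : Type*} [Fintype X] (Q : Matrix X X ℝ) (π g : X → ℝ)
    (hstat : ∀ y, ∑ x, π x * Q x y = π y) :
    ∑ x, π x * ∑ y, Q x y * g y = ∑ x, π x * g x := by
  simp_rw [Finset.mul_sum]
  rw [Finset.sum_comm]
  refine Finset.sum_congr rfl fun y _ => ?_
  rw [← hstat y, Finset.sum_mul]
  exact Finset.sum_congr rfl fun x _ => by ring


/-- **variational formula for the entropic risk measure.** For a finite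
irreducible aperiodic chain with transition matrix `P` and cost `C`, the entropic risk
`e(α) := Λ(α)/α` (with `Λ(α) = ln λ̂₁`, the log-Perron eigenvalue of `diag (e^{αC}) P`,
characterized by a strictly positive right eigenvector) equals the supremum over all
irreducible aperiodic stochastic matrices `Q ≪ P` — with (unique) stationary distribution
`π_Q` — of `E_{π_Q}[C] − (1/α) E_{π_Q}[D_KL(Q(X,·)‖P(X,·))]`. -/
theorem statement9 {X : Type*} [Fintype X] [DecidableEq X] [Nonempty X]
    (P : Matrix X X ℝ) (hP : StochasticMat P) (hprim : PrimitiveMat P)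
    (C : X → ℝ) (α : ℝ) (hα : 0 < α)
    (lam : ℝ) (h : X → ℝ) (hpos : ∀ x, 0 < h x)
    (heig : (Matrix.of fun x y => Real.exp (α * C x) * P x y) *ᵥ h = lam • h) :
    Real.log lam / α =
      sSup {v : ℝ | ∃ Q : Matrix X X ℝ, ∃ π : X → ℝ,
        StochasticMat Q ∧ PrimitiveMat Q ∧
        (∀ x y, P x y = 0 → Q x y = 0) ∧
        (∀ x, 0 ≤ π x) ∧ (∑ x, π x = 1) ∧ (∀ y, ∑ x, π x * Q x y = π y) ∧
        v = (∑ x, π x * C x) -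
          (1 / α) * ∑ x, π x * ∑ y, Q x y * Real.log (Q x y / P x y)} := by

  obtain ⟨hPnn, hProw⟩ := hP
  set S : Matrix X X ℝ := Matrix.of fun x y => Real.exp (α * C x) * P x y with hS
  have hSapp : ∀ x y, S x y = Real.exp (α * C x) * P x y := fun x y => rfl
  have hSnn : ∀ x y, 0 ≤ S x y := fun x y => mul_nonneg (Real.exp_pos _).le (hPnn x y)
  have hrow : ∀ x, ∑ y, S x y * h y = lam * h x := by
    intro x
    have hx := congrFun heig x
    simpa [Matrix.mulVec, dotProduct] using hx
  have hlam : 0 < lam := by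
    obtain ⟨x0⟩ := ‹Nonempty X›
    have hex : ∃ y, 0 < P x0 y := by
      by_contra hc; push_neg at hc
      have hz : ∀ y, P x0 y = 0 := fun y => le_antisymm (hc y) (hPnn x0 y)
      have h1 := hProw x0
      rw [Finset.sum_congr rfl fun y _ => hz y] at h1
      simp at h1
    obtain ⟨y0, hy0⟩ := hex
    have hpos' : 0 < ∑ y, S x0 y * h y :=
      Finset.sum_pos' (fun y _ => mul_nonneg (hSnn x0 y) (hpos y).le)
        ⟨y0, Finset.mem_univ _, by
          rw [hSapp]; exact mul_pos (mul_pos (Real.exp_pos _) hy0) (hpos y0)⟩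
    rw [hrow x0] at hpos'
    nlinarith [hpos x0]
  set Qh : Matrix X X ℝ := Matrix.of fun x y => S x y * h y / (lam * h x) with hQhdef
  have hQhapp : ∀ x y, Qh x y = S x y * h y / (lam * h x) := fun _ _ => rfl
  have hQhrow : ∀ x, ∑ y, Qh x y = 1 := by
    intro x
    simp_rw [hQhapp]
    rw [← Finset.sum_div, hrow x, div_self (mul_pos hlam (hpos x)).ne']
  have hQhstoch : StochasticMat Qh :=
    ⟨fun x y => div_nonneg (mul_nonneg (hSnn x y) (hpos y).le)
      (mul_pos hlam (hpos x)).le, hQhrow⟩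
  have hQhprim : PrimitiveMat Qh := by
    obtain ⟨n, hn, hPn⟩ := hprim
    set c := Finset.univ.inf' Finset.univ_nonempty (fun x => Real.exp (α * C x)) with hc'
    have hc : 0 < c := by
      obtain ⟨x0, _, hx0⟩ :=
        Finset.exists_mem_eq_inf' Finset.univ_nonempty (fun x => Real.exp (α * C x))
      rw [hc', hx0]; exact Real.exp_pos _
    have hle : ∀ x y, c * P x y ≤ S x y := fun x y => by
      rw [hSapp]
      exact mul_le_mul_of_nonneg_right
        (Finset.inf'_le _ (Finset.mem_univ x)) (hPnn x y)
    have hQform := pow_formula S Qh h hpos lam hlam hQhapp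
    refine ⟨n, hn, fun x y => ?_⟩
    rw [hQform n x y]
    have h1 : 0 < (S ^ n) x y :=
      lt_of_lt_of_le (mul_pos (pow_pos hc n) (hPn x y)) (pow_lower S P c hc hPnn hle n x y)
    exact div_pos (mul_pos h1 (hpos y)) (mul_pos (pow_pos hlam n) (hpos x))
  have habs : ∀ x y, P x y = 0 → Qh x y = 0 := by
    intro x y hp
    rw [hQhapp, hSapp, hp]
    simp
  obtain ⟨π, hπnn, hπsum, hπstat⟩ := exists_stationary Qh hQhstoch
  -- value computation for Qh
  have hterm : ∀ x y, Qh x y * Real.log (Qh x y / P x y)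
      = Qh x y * (α * C x - Real.log lam + Real.log (h y) - Real.log (h x)) := by
    intro x y
    by_cases hp : P x y = 0
    · rw [habs x y hp]; ring
    · have hppos : 0 < P x y := lt_of_le_of_ne (hPnn x y) (Ne.symm hp)
      have h1 : Qh x y / P x y = Real.exp (α * C x) * h y / (lam * h x) := by
        rw [hQhapp, hSapp]
        field_simp [hppos.ne']
      rw [h1]
      congr 1
      rw [Real.log_div (mul_pos (Real.exp_pos _) (hpos y)).ne'
          (mul_pos hlam (hpos x)).ne',
        Real.log_mul (Real.exp_pos _).ne' (hpos y).ne',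
        Real.log_mul hlam.ne' (hpos x).ne', Real.log_exp]
      ring
  have hinner : ∀ x, ∑ y, Qh x y * Real.log (Qh x y / P x y)
      = α * C x - Real.log lam - Real.log (h x) + ∑ y, Qh x y * Real.log (h y) := by
    intro x
    calc ∑ y, Qh x y * Real.log (Qh x y / P x y)
        = ∑ y, (Qh x y * (α * C x - Real.log lam - Real.log (h x))
            + Qh x y * Real.log (h y)) := by
          rw [Finset.sum_congr rfl fun y _ => hterm x y]
          exact Finset.sum_congr rfl fun y _ => by ring
      _ = (∑ y, Qh x y) * (α * C x - Real.log lam - Real.log (h x))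
            + ∑ y, Qh x y * Real.log (h y) := by
          rw [Finset.sum_add_distrib, Finset.sum_mul]
      _ = _ := by rw [hQhrow x]; ring
  have hD : ∑ x, π x * ∑ y, Qh x y * Real.log (Qh x y / P x y)
      = α * (∑ x, π x * C x) - Real.log lam := by
    rw [Finset.sum_congr rfl fun x _ => by rw [hinner x]]
    have split : ∑ x, π x * (α * C x - Real.log lam - Real.log (h x)
          + ∑ y, Qh x y * Real.log (h y))
        = α * (∑ x, π x * C x) - Real.log lam * (∑ x, π x)
          - (∑ x, π x * Real.log (h x))
          + ∑ x, π x * ∑ y, Qh x y * Real.log (h y) := by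
      rw [Finset.mul_sum, Finset.mul_sum, ← Finset.sum_sub_distrib,
        ← Finset.sum_sub_distrib, ← Finset.sum_add_distrib]
      exact Finset.sum_congr rfl fun x _ => by ring
    rw [split, stat_transfer Qh π (fun x => Real.log (h x)) hπstat, hπsum]
    ring
  -- the set
  set Sset : Set ℝ := {v : ℝ | ∃ Q : Matrix X X ℝ, ∃ π : X → ℝ,
        StochasticMat Q ∧ PrimitiveMat Q ∧
        (∀ x y, P x y = 0 → Q x y = 0) ∧
        (∀ x, 0 ≤ π x) ∧ (∑ x, π x = 1) ∧ (∀ y, ∑ x, π x * Q x y = π y) ∧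
        v = (∑ x, π x * C x) -
          (1 / α) * ∑ x, π x * ∑ y, Q x y * Real.log (Q x y / P x y)} with hSset
  have hmem : Real.log lam / α ∈ Sset := by
    refine ⟨Qh, π, hQhstoch, hQhprim, habs, hπnn, hπsum, hπstat, ?_⟩
    rw [hD]
    field_simp
    ring
  have hub : ∀ v ∈ Sset, v ≤ Real.log lam / α := by
    rintro v ⟨Q, π', ⟨hQnn, hQrow⟩, -, habsQ, hπnn', hπsum', hπstat', rfl⟩
    rw [le_div_iff₀ hα]
    have hxy : ∀ x y, Q x y * (α * C x - Real.log (Q x y / P x y)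
        + Real.log (h y) - Real.log (h x) - Real.log lam)
        ≤ S x y * h y / (lam * h x) - Q x y := by
      intro x y
      by_cases hq : Q x y = 0
      · rw [hq]
        have : (0:ℝ) ≤ S x y * h y / (lam * h x) :=
          div_nonneg (mul_nonneg (hSnn x y) (hpos y).le) (mul_pos hlam (hpos x)).le
        linarith
      · have hqpos : 0 < Q x y := lt_of_le_of_ne (hQnn x y) (Ne.symm hq)
        have hppos : 0 < P x y := by
          rcases eq_or_lt_of_le (hPnn x y) with he | hl
          · exact absurd (habsQ x y he.symm) hq
          · exact hl
        set t := S x y * h y / (lam * h x * Q x y) with ht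
        have htpos : 0 < t := by
          rw [ht, hSapp]
          exact div_pos (mul_pos (mul_pos (Real.exp_pos _) hppos) (hpos y))
            (mul_pos (mul_pos hlam (hpos x)) hqpos)
        have hlog := Real.log_le_sub_one_of_pos htpos
        have hlogt : Real.log t = α * C x - Real.log (Q x y / P x y)
            + Real.log (h y) - Real.log (h x) - Real.log lam := by
          rw [ht, hSapp,
            Real.log_div (mul_pos (mul_pos (Real.exp_pos _) hppos) (hpos y)).ne'
              (mul_pos (mul_pos hlam (hpos x)) hqpos).ne',
            Real.log_mul (mul_pos (Real.exp_pos _) hppos).ne' (hpos y).ne',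
            Real.log_mul (Real.exp_pos _).ne' hppos.ne',
            Real.log_mul (mul_pos hlam (hpos x)).ne' hqpos.ne',
            Real.log_mul hlam.ne' (hpos x).ne',
            Real.log_exp, Real.log_div hqpos.ne' hppos.ne']
          ring
        have hmul := mul_le_mul_of_nonneg_left hlog hqpos.le
        rw [hlogt] at hmul
        have ht2 : Q x y * (t - 1) = S x y * h y / (lam * h x) - Q x y := by
          rw [ht]
          field_simp [hlam.ne', (hpos x).ne', hqpos.ne']
        linarith
    have hxle : ∀ x, α * C x - (∑ y, Q x y * Real.log (Q x y / P x y))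
        + (∑ y, Q x y * Real.log (h y)) - Real.log (h x) - Real.log lam ≤ 0 := by
      intro x
      have hsum : ∑ y, Q x y * (α * C x - Real.log (Q x y / P x y)
            + Real.log (h y) - Real.log (h x) - Real.log lam)
          ≤ ∑ y, (S x y * h y / (lam * h x) - Q x y) :=
        Finset.sum_le_sum fun y _ => hxy x y
      have hR : ∑ y, (S x y * h y / (lam * h x) - Q x y) = 0 := by
        rw [Finset.sum_sub_distrib, ← Finset.sum_div, hrow x, hQrow x,
          div_self (mul_pos hlam (hpos x)).ne']
        ring
      have hL : ∑ y, Q x y * (α * C x - Real.log (Q x y / P x y)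
            + Real.log (h y) - Real.log (h x) - Real.log lam)
          = (∑ y, Q x y) * (α * C x - Real.log (h x) - Real.log lam)
            - (∑ y, Q x y * Real.log (Q x y / P x y))
            + ∑ y, Q x y * Real.log (h y) := by
        rw [Finset.sum_mul, ← Finset.sum_sub_distrib, ← Finset.sum_add_distrib]
        exact Finset.sum_congr rfl fun y _ => by ring
      rw [hL, hQrow x, hR] at hsum
      linarith
    have hsum2 : ∑ x, π' x * (α * C x - (∑ y, Q x y * Real.log (Q x y / P x y))
        + (∑ y, Q x y * Real.log (h y)) - Real.log (h x) - Real.log lam) ≤ 0 := by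
      have : ∀ x ∈ Finset.univ, π' x * (α * C x
          - (∑ y, Q x y * Real.log (Q x y / P x y))
          + (∑ y, Q x y * Real.log (h y)) - Real.log (h x) - Real.log lam)
          ≤ π' x * 0 := fun x _ => mul_le_mul_of_nonneg_left (hxle x) (hπnn' x)
      calc _ ≤ ∑ x, π' x * 0 := Finset.sum_le_sum this
        _ = 0 := by simp
    have split2 : ∑ x, π' x * (α * C x - (∑ y, Q x y * Real.log (Q x y / P x y))
          + (∑ y, Q x y * Real.log (h y)) - Real.log (h x) - Real.log lam)
        = α * (∑ x, π' x * C x)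
          - (∑ x, π' x * ∑ y, Q x y * Real.log (Q x y / P x y))
          + (∑ x, π' x * ∑ y, Q x y * Real.log (h y))
          - (∑ x, π' x * Real.log (h x)) - Real.log lam * (∑ x, π' x) := by
      rw [Finset.mul_sum, Finset.mul_sum, ← Finset.sum_sub_distrib,
        ← Finset.sum_add_distrib, ← Finset.sum_sub_distrib, ← Finset.sum_sub_distrib]
      exact Finset.sum_congr rfl fun x _ => by ring
    rw [split2, stat_transfer Q π' (fun x => Real.log (h x)) hπstat', hπsum'] at hsum2
    have hkey : α * (∑ x, π' x * C x)
        - (∑ x, π' x * ∑ y, Q x y * Real.log (Q x y / P x y)) ≤ Real.log lam := by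
      linarith
    have heq : ((∑ x, π' x * C x) -
        (1 / α) * ∑ x, π' x * ∑ y, Q x y * Real.log (Q x y / P x y)) * α
        = α * (∑ x, π' x * C x)
          - (∑ x, π' x * ∑ y, Q x y * Real.log (Q x y / P x y)) := by
      field_simp
    rw [heq]
    exact hkey
  exact le_antisymm (le_csSup ⟨Real.log lam / α, hub⟩ hmem) (csSup_le ⟨_, hmem⟩ hub)
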